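/- Let g = e^{c₁C₁} e^{c₂C₂} e^{p₁P₁} e^{p₂P₂} e^{dD} e^{θJ} as a product of matrix exponentials of the 4×4 representation matrices. Then g equals the explicit 4×4 matrix with block form: upper-left 2×2 block [[C_{-μ}(θ), -μS_{-μ}(θ)],[-S_{-μ}(θ), C_{-μ}(θ)]], lower-right 2×2 block [[cosh d, sinh d],[sinh d, cosh d]], upper-right 2×2 block zero, and lower-left entries t₃₁ = (p₂-c₂)C_{-μ}(θ) - (p₁-c₁)S_{-μ}(θ), t₃₂ = (p₁-c₁)C_{-μ}(θ) - μ(p₂-c₂)S_{-μ}(θ), t₄₁ = (p₂+c₂)C_{-μ}(θ) - (p₁+c₁)S_{-μ}(θ), t₄₂ = (p₁+c₁)C_{-μ}(θ) - μ(p₂+c₂)S_{-μ}(θ). -/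

import Mathlib

open Matrix

def grpJ (μ : ℝ) : Matrix (Fin 4) (Fin 4) ℝ :=
  !![0, -μ, 0, 0; -1, 0, 0, 0; 0, 0, 0, 0; 0, 0, 0, 0]

def grpP1 : Matrix (Fin 4) (Fin 4) ℝ :=
  !![0, 0, 0, 0; 0, 0, 0, 0; 0, 1, 0, 0; 0, 1, 0, 0]

def grpP2 : Matrix (Fin 4) (Fin 4) ℝ :=
  !![0, 0, 0, 0; 0, 0, 0, 0; 1, 0, 0, 0; 1, 0, 0, 0]

def grpD : Matrix (Fin 4) (Fin 4) ℝ :=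
  !![0, 0, 0, 0; 0, 0, 0, 0; 0, 0, 0, 1; 0, 0, 1, 0]

def grpC1 : Matrix (Fin 4) (Fin 4) ℝ :=
  !![0, 0, 0, 0; 0, 0, 0, 0; 0, -1, 0, 0; 0, 1, 0, 0]

def grpC2 : Matrix (Fin 4) (Fin 4) ℝ :=
  !![0, 0, 0, 0; 0, 0, 0, 0; -1, 0, 0, 0; 1, 0, 0, 0]

/-- C_{-μ}(θ) = cosh(√μ θ). -/
noncomputable def genC (μ θ : ℝ) : ℝ := Real.cosh (Real.sqrt μ * θ)

/-- S_{-μ}(θ) = sinh(√μ θ)/√μ. -/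
noncomputable def genS (μ θ : ℝ) : ℝ := Real.sinh (Real.sqrt μ * θ) / Real.sqrt μ

/- ### Auxiliary lemmas -/

theorem exp_sq_zero (A : Matrix (Fin 4) (Fin 4) ℝ) (h : A * A = 0) :
    NormedSpace.exp A = 1 + A := by
  rw [NormedSpace.exp_eq_tsum ℝ]
  beta_reduce
  rw [tsum_eq_sum (s := Finset.range 2) (by
    intro n hn
    simp only [Finset.mem_range, not_lt] at hn
    obtain ⟨m, rfl⟩ := Nat.exists_eq_add_of_le hn
    rw [pow_add, pow_two, h, zero_mul, smul_zero])]
  simp [Finset.sum_range_succ]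

theorem mul_fin_four' {α} [AddCommMonoid α] [Mul α]
    (a₁₁ a₁₂ a₁₃ a₁₄ a₂₁ a₂₂ a₂₃ a₂₄ a₃₁ a₃₂ a₃₃ a₃₄ a₄₁ a₄₂ a₄₃ a₄₄
     b₁₁ b₁₂ b₁₃ b₁₄ b₂₁ b₂₂ b₂₃ b₂₄ b₃₁ b₃₂ b₃₃ b₃₄ b₄₁ b₄₂ b₄₃ b₄₄ : α) :
    !![a₁₁, a₁₂, a₁₃, a₁₄;
       a₂₁, a₂₂, a₂₃, a₂₄;
       a₃₁, a₃₂, a₃₃, a₃₄;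
       a₄₁, a₄₂, a₄₃, a₄₄] * !![b₁₁, b₁₂, b₁₃, b₁₄;
                                 b₂₁, b₂₂, b₂₃, b₂₄;
                                 b₃₁, b₃₂, b₃₃, b₃₄;
                                 b₄₁, b₄₂, b₄₃, b₄₄] =
    !![a₁₁*b₁₁ + a₁₂*b₂₁ + a₁₃*b₃₁ + a₁₄*b₄₁, a₁₁*b₁₂ + a₁₂*b₂₂ + a₁₃*b₃₂ + a₁₄*b₄₂,
         a₁₁*b₁₃ + a₁₂*b₂₃ + a₁₃*b₃₃ + a₁₄*b₄₃, a₁₁*b₁₄ + a₁₂*b₂₄ + a₁₃*b₃₄ + a₁₄*b₄₄;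
       a₂₁*b₁₁ + a₂₂*b₂₁ + a₂₃*b₃₁ + a₂₄*b₄₁, a₂₁*b₁₂ + a₂₂*b₂₂ + a₂₃*b₃₂ + a₂₄*b₄₂,
         a₂₁*b₁₃ + a₂₂*b₂₃ + a₂₃*b₃₃ + a₂₄*b₄₃, a₂₁*b₁₄ + a₂₂*b₂₄ + a₂₃*b₃₄ + a₂₄*b₄₄;
       a₃₁*b₁₁ + a₃₂*b₂₁ + a₃₃*b₃₁ + a₃₄*b₄₁, a₃₁*b₁₂ + a₃₂*b₂₂ + a₃₃*b₃₂ + a₃₄*b₄₂,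
         a₃₁*b₁₃ + a₃₂*b₂₃ + a₃₃*b₃₃ + a₃₄*b₄₃, a₃₁*b₁₄ + a₃₂*b₂₄ + a₃₃*b₃₄ + a₃₄*b₄₄;
       a₄₁*b₁₁ + a₄₂*b₂₁ + a₄₃*b₃₁ + a₄₄*b₄₁, a₄₁*b₁₂ + a₄₂*b₂₂ + a₄₃*b₃₂ + a₄₄*b₄₂,
         a₄₁*b₁₃ + a₄₂*b₂₃ + a₄₃*b₃₃ + a₄₄*b₄₃, a₄₁*b₁₄ + a₄₂*b₂₄ + a₄₃*b₃₄ + a₄₄*b₄₄] := by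
  ext i j
  fin_cases i <;> fin_cases j <;>
    simp [Matrix.mul_apply, Fin.sum_univ_succ, ← add_assoc]

theorem one_fin_four' {α} [Zero α] [One α] :
    (1 : Matrix (Fin 4) (Fin 4) α) = !![1,0,0,0; 0,1,0,0; 0,0,1,0; 0,0,0,1] := by
  ext i j
  fin_cases i <;> fin_cases j <;> rfl

theorem smul_fin_four' (c : ℝ) (a₁₁ a₁₂ a₁₃ a₁₄ a₂₁ a₂₂ a₂₃ a₂₄ a₃₁ a₃₂ a₃₃ a₃₄
     a₄₁ a₄₂ a₄₃ a₄₄ : ℝ) :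
    c • !![a₁₁, a₁₂, a₁₃, a₁₄; a₂₁, a₂₂, a₂₃, a₂₄; a₃₁, a₃₂, a₃₃, a₃₄; a₄₁, a₄₂, a₄₃, a₄₄] =
    !![c*a₁₁, c*a₁₂, c*a₁₃, c*a₁₄; c*a₂₁, c*a₂₂, c*a₂₃, c*a₂₄;
       c*a₃₁, c*a₃₂, c*a₃₃, c*a₃₄; c*a₄₁, c*a₄₂, c*a₄₃, c*a₄₄] := by
  ext i j
  fin_cases i <;> fin_cases j <;> rfl

theorem add_fin_four' {α} [Add α]
    (a₁₁ a₁₂ a₁₃ a₁₄ a₂₁ a₂₂ a₂₃ a₂₄ a₃₁ a₃₂ a₃₃ a₃₄ a₄₁ a₄₂ a₄₃ a₄₄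
     b₁₁ b₁₂ b₁₃ b₁₄ b₂₁ b₂₂ b₂₃ b₂₄ b₃₁ b₃₂ b₃₃ b₃₄ b₄₁ b₄₂ b₄₃ b₄₄ : α) :
    !![a₁₁, a₁₂, a₁₃, a₁₄; a₂₁, a₂₂, a₂₃, a₂₄; a₃₁, a₃₂, a₃₃, a₃₄; a₄₁, a₄₂, a₄₃, a₄₄] +
    !![b₁₁, b₁₂, b₁₃, b₁₄; b₂₁, b₂₂, b₂₃, b₂₄; b₃₁, b₃₂, b₃₃, b₃₄; b₄₁, b₄₂, b₄₃, b₄₄] =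
    !![a₁₁+b₁₁, a₁₂+b₁₂, a₁₃+b₁₃, a₁₄+b₁₄; a₂₁+b₂₁, a₂₂+b₂₂, a₂₃+b₂₃, a₂₄+b₂₄;
       a₃₁+b₃₁, a₃₂+b₃₂, a₃₃+b₃₃, a₃₄+b₃₄; a₄₁+b₄₁, a₄₂+b₄₂, a₄₃+b₄₃, a₄₄+b₄₄] := by
  ext i j
  fin_cases i <;> fin_cases j <;> rfl

theorem diag_fin_four' {α} [Zero α] (a b c d : α) :
    Matrix.diagonal ![a,b,c,d] = !![a,0,0,0; 0,b,0,0; 0,0,c,0; 0,0,0,d] := by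
  ext i j
  fin_cases i <;> fin_cases j <;> rfl

set_option maxHeartbeats 1000000 in
/-- exponential of the D part -/
theorem exp_dD (d : ℝ) : NormedSpace.exp (d • grpD) =
    !![1,0,0,0; 0,1,0,0; 0,0,Real.cosh d, Real.sinh d; 0,0,Real.sinh d, Real.cosh d] := by
  have hUv : (!![1,0,0,0; 0,1,0,0; 0,0,1,1; 0,0,1,-1] : Matrix (Fin 4) (Fin 4) ℝ) *
      !![1,0,0,0; 0,1,0,0; 0,0,(1:ℝ)/2,1/2; 0,0,1/2,-(1/2)] = 1 := by
    rw [mul_fin_four', one_fin_four']; norm_num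
  have hUi : (!![1,0,0,0; 0,1,0,0; 0,0,(1:ℝ)/2,1/2; 0,0,1/2,-(1/2)] : Matrix (Fin 4) (Fin 4) ℝ) *
      !![1,0,0,0; 0,1,0,0; 0,0,1,1; 0,0,1,-1] = 1 := by
    rw [mul_fin_four', one_fin_four']; norm_num
  set U : (Matrix (Fin 4) (Fin 4) ℝ)ˣ := ⟨_, _, hUv, hUi⟩ with hU
  have hconj : d • grpD = (U : Matrix (Fin 4) (Fin 4) ℝ) * Matrix.diagonal ![0, 0, d, -d] * ((U⁻¹ : (Matrix (Fin 4) (Fin 4) ℝ)ˣ) : Matrix (Fin 4) (Fin 4) ℝ) := by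
    show d • grpD = !![1,0,0,0; 0,1,0,0; 0,0,1,1; 0,0,1,-1] * _ *
      !![1,0,0,0; 0,1,0,0; 0,0,(1:ℝ)/2,1/2; 0,0,1/2,-(1/2)]
    rw [grpD, smul_fin_four', diag_fin_four', mul_fin_four', mul_fin_four']
    ext i j
    fin_cases i <;> fin_cases j <;> norm_num <;> ring
  rw [hconj, Matrix.exp_units_conj, Matrix.exp_diagonal]
  have hv : (NormedSpace.exp (![0,0,d,-d] : Fin 4 → ℝ)) = ![1,1,Real.exp d, Real.exp (-d)] := by
    funext i
    fin_cases i <;> simp [Pi.coe_exp, ← Real.exp_eq_exp_ℝ]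
  rw [hv, diag_fin_four']
  show !![1,0,0,0; 0,1,0,0; 0,0,1,1; 0,0,1,-1] * _ *
      !![1,0,0,0; 0,1,0,0; 0,0,(1:ℝ)/2,1/2; 0,0,1/2,-(1/2)] = _
  rw [mul_fin_four', mul_fin_four']
  ext i j
  fin_cases i <;> fin_cases j <;> simp [Real.cosh_eq, Real.sinh_eq] <;> ring

theorem exp_c1 (c : ℝ) : NormedSpace.exp (c • grpC1) =
    !![1,0,0,0; 0,1,0,0; 0,-c,1,0; 0,c,0,1] := by
  rw [exp_sq_zero]
  · rw [grpC1, smul_fin_four', one_fin_four', add_fin_four']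
    ext i j; fin_cases i <;> fin_cases j <;> norm_num
  · rw [grpC1, smul_fin_four', mul_fin_four']
    ext i j; fin_cases i <;> fin_cases j <;> norm_num

theorem exp_c2 (c : ℝ) : NormedSpace.exp (c • grpC2) =
    !![1,0,0,0; 0,1,0,0; -c,0,1,0; c,0,0,1] := by
  rw [exp_sq_zero]
  · rw [grpC2, smul_fin_four', one_fin_four', add_fin_four']
    ext i j; fin_cases i <;> fin_cases j <;> norm_num
  · rw [grpC2, smul_fin_four', mul_fin_four']
    ext i j; fin_cases i <;> fin_cases j <;> norm_num

theorem exp_p1 (p : ℝ) : NormedSpace.exp (p • grpP1) =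
    !![1,0,0,0; 0,1,0,0; 0,p,1,0; 0,p,0,1] := by
  rw [exp_sq_zero]
  · rw [grpP1, smul_fin_four', one_fin_four', add_fin_four']
    ext i j; fin_cases i <;> fin_cases j <;> norm_num
  · rw [grpP1, smul_fin_four', mul_fin_four']
    ext i j; fin_cases i <;> fin_cases j <;> norm_num

theorem exp_p2 (p : ℝ) : NormedSpace.exp (p • grpP2) =
    !![1,0,0,0; 0,1,0,0; p,0,1,0; p,0,0,1] := by
  rw [exp_sq_zero]
  · rw [grpP2, smul_fin_four', one_fin_four', add_fin_four']
    ext i j; fin_cases i <;> fin_cases j <;> norm_num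
  · rw [grpP2, smul_fin_four', mul_fin_four']
    ext i j; fin_cases i <;> fin_cases j <;> norm_num

set_option maxHeartbeats 1000000 in
theorem exp_J (s θ : ℝ) (hs : 0 < s) : NormedSpace.exp (θ • grpJ (s*s)) =
    !![Real.cosh (s*θ), -(s*s) * (Real.sinh (s*θ)/s), 0, 0;
       -(Real.sinh (s*θ)/s), Real.cosh (s*θ), 0, 0;
       0, 0, 1, 0; 0, 0, 0, 1] := by
  have hs' : s ≠ 0 := ne_of_gt hs
  have hUv : (!![s,s,0,0; -1,1,0,0; 0,0,1,0; 0,0,0,1] : Matrix (Fin 4) (Fin 4) ℝ) *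
      !![1/(2*s), -(1/2),0,0; 1/(2*s), 1/2,0,0; 0,0,1,0; 0,0,0,1] = 1 := by
    rw [mul_fin_four', one_fin_four']
    ext i j; fin_cases i <;> fin_cases j <;> norm_num <;> field_simp <;> ring
  have hUi : (!![1/(2*s), -(1/2),0,0; 1/(2*s), 1/2,0,0; 0,0,1,0; 0,0,0,1]
        : Matrix (Fin 4) (Fin 4) ℝ) *
      !![s,s,0,0; -1,1,0,0; 0,0,1,0; 0,0,0,1] = 1 := by
    rw [mul_fin_four', one_fin_four']
    ext i j; fin_cases i <;> fin_cases j <;> norm_num <;> field_simp <;> ring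
  set U : (Matrix (Fin 4) (Fin 4) ℝ)ˣ := ⟨_, _, hUv, hUi⟩ with hU
  have hconj : θ • grpJ (s*s) = (U : Matrix (Fin 4) (Fin 4) ℝ) *
      Matrix.diagonal ![s*θ, -(s*θ), 0, 0] *
      ((U⁻¹ : (Matrix (Fin 4) (Fin 4) ℝ)ˣ) : Matrix (Fin 4) (Fin 4) ℝ) := by
    show θ • grpJ (s*s) = !![s,s,0,0; -1,1,0,0; 0,0,1,0; 0,0,0,1] * _ *
      !![1/(2*s), -(1/2),0,0; 1/(2*s), 1/2,0,0; 0,0,1,0; 0,0,0,1]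
    rw [grpJ, smul_fin_four', diag_fin_four', mul_fin_four', mul_fin_four']
    ext i j
    fin_cases i <;> fin_cases j <;> norm_num <;> field_simp <;> ring
  rw [hconj, Matrix.exp_units_conj, Matrix.exp_diagonal]
  have hv : (NormedSpace.exp (![s*θ, -(s*θ), 0, 0] : Fin 4 → ℝ)) =
      ![Real.exp (s*θ), Real.exp (-(s*θ)), 1, 1] := by
    funext i
    fin_cases i <;> simp [Pi.coe_exp, ← Real.exp_eq_exp_ℝ]
  rw [hv, diag_fin_four']
  show !![s,s,0,0; -1,1,0,0; 0,0,1,0; 0,0,0,1] * _ *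
      !![1/(2*s), -(1/2),0,0; 1/(2*s), 1/2,0,0; 0,0,1,0; 0,0,0,1] = _
  rw [mul_fin_four', mul_fin_four']
  ext i j
  fin_cases i <;> fin_cases j <;>
    simp [Real.cosh_eq, Real.sinh_eq] <;> field_simp <;> ring

set_option maxHeartbeats 1000000 in
/-- The group element g = e^{c₁C₁} e^{c₂C₂} e^{p₁P₁} e^{p₂P₂} e^{dD} e^{θJ}
of G_μ equals the explicit 4×4 matrix of the paper. -/
theorem group_element_matrix (μ θ d p₁ p₂ c₁ c₂ : ℝ) (hμ : 0 < μ) :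
    NormedSpace.exp (c₁ • grpC1) * NormedSpace.exp (c₂ • grpC2) *
      NormedSpace.exp (p₁ • grpP1) * NormedSpace.exp (p₂ • grpP2) *
      NormedSpace.exp (d • grpD) * NormedSpace.exp (θ • grpJ μ)
    = !![genC μ θ, -μ * genS μ θ, 0, 0;
         -genS μ θ, genC μ θ, 0, 0;
         (p₂ - c₂) * genC μ θ - (p₁ - c₁) * genS μ θ,
           (p₁ - c₁) * genC μ θ - μ * (p₂ - c₂) * genS μ θ,
           Real.cosh d, Real.sinh d;
         (p₂ + c₂) * genC μ θ - (p₁ + c₁) * genS μ θ,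
           (p₁ + c₁) * genC μ θ - μ * (p₂ + c₂) * genS μ θ,
           Real.sinh d, Real.cosh d] := by
  obtain ⟨s, hs0, rfl⟩ : ∃ s : ℝ, 0 < s ∧ s * s = μ :=
    ⟨Real.sqrt μ, Real.sqrt_pos.2 hμ, Real.mul_self_sqrt hμ.le⟩
  have hs' : s ≠ 0 := ne_of_gt hs0
  rw [exp_c1, exp_c2, exp_p1, exp_p2, exp_dD, exp_J s θ hs0]
  rw [mul_fin_four', mul_fin_four', mul_fin_four', mul_fin_four', mul_fin_four']
  ext i j
  fin_cases i <;> fin_cases j <;>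
    simp [genC, genS, Real.sqrt_mul_self hs0.le] <;> field_simp <;> ring
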